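/- Let $X$ be a finite-dimensional real Banach space and $U: X+iX \to \mathbb{R}$ a twice differentiable plurisubharmonic function. Then for any $z_0 \in X+iX$, any $x, y \in X$ and any $\lambda \in [-1,1]$: $\frac{\partial^2 U(z_0)}{\partial x^2} + \frac{\partial^2 U(z_0)}{\partial y^2} + 2\lambda\left(\frac{\partial^2 U(z_0)}{\partial x\, \partial (iy)} - \frac{\partial^2 U(z_0)}{\partial y\, \partial (ix)}\right) + \lambda^2\left(\frac{\partial^2 U(z_0)}{\partial (ix)^2} + \frac{\partial^2 U(z_0)}{\partial (iy)^2}\right) \geq 0$, provided additionally $v \mapsto U(u + iv)$ is concave in $v$ for each fixed $u \in X$. -/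

import Mathlib

open Set

variable {X : Type*} [NormedAddCommGroup X] [NormedSpace ℝ X]

/-- Second directional derivative of `U` at `p` in directions `a`, `b`. -/
noncomputable def secondDirDeriv (U : X → ℝ) (p a b : X) : ℝ :=
  fderiv ℝ (fun y => fderiv ℝ U y a) p b

/-- Multiplication by `i` on the complexification `X + iX ≃ X × X`. -/
def Jmap (p : X × X) : X × X := (-p.2, p.1)

/-- For a `C²` function, `secondDirDeriv` is the full second derivative applied to `b`, `a`. -/
lemma secondDirDeriv_eq (U : X → ℝ) (hU : ContDiff ℝ 2 U) (p a b : X) :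
    secondDirDeriv U p a b = fderiv ℝ (fderiv ℝ U) p b a := by
  have hd : DifferentiableAt ℝ (fderiv ℝ U) p := by
    have : ContDiff ℝ 1 (fderiv ℝ U) := hU.fderiv_right (by norm_num)
    exact this.differentiable one_ne_zero p
  have h1 : HasFDerivAt (fun y => fderiv ℝ U y a)
      ((ContinuousLinearMap.apply ℝ ℝ a).comp (fderiv ℝ (fderiv ℝ U) p)) p :=
    (ContinuousLinearMap.apply ℝ ℝ a).hasFDerivAt.comp p hd.hasFDerivAt
  simp [secondDirDeriv, h1.fderiv]

/-- Derivative of a monotone-decreasing reading: if `φ` is antitone and differentiable at `t`,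
then its derivative is nonpositive. -/
lemma antitone_hasDerivAt_nonpos {φ : ℝ → ℝ} {c t : ℝ} (hφ : Antitone φ)
    (h : HasDerivAt φ c t) : c ≤ 0 := by
  have h' := hasDerivAt_iff_tendsto_slope.1 h
  have h'' : Filter.Tendsto (slope φ t) (nhdsWithin t (Ioi t)) (nhds c) :=
    h'.mono_left (nhdsWithin_mono t fun s hs => ne_of_gt hs)
  refine le_of_tendsto h'' ?_
  filter_upwards [self_mem_nhdsWithin] with s hs
  have : φ s ≤ φ t := hφ (le_of_lt hs)
  have ht : (0:ℝ) < s - t := by simpa using sub_pos.2 (show t < s from hs)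
  rw [slope_def_field]
  rw [div_nonpos_iff]
  right
  constructor
  · linarith
  · linarith

/-- Second derivative along a line, as a `HasDerivAt` statement. -/
lemma hasDerivAt_line (U : X × X → ℝ) (hU : ContDiff ℝ 2 U) (z v : X × X) :
    (∀ t : ℝ, HasDerivAt (fun s : ℝ => U (z + s • v)) (fderiv ℝ U (z + t • v) v) t) ∧
    HasDerivAt (fun t : ℝ => fderiv ℝ U (z + t • v) v) (fderiv ℝ (fderiv ℝ U) z v v) 0 := by
  have hL : ∀ t : ℝ, HasDerivAt (fun s : ℝ => z + s • v) v t := by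
    intro t
    simpa using ((hasDerivAt_id t).smul_const v).const_add z
  constructor
  · intro t
    exact ((hU.differentiable (by norm_num) (z + t • v)).hasFDerivAt).comp_hasDerivAt t (hL t)
  · have hd : DifferentiableAt ℝ (fderiv ℝ U) z := by
      have : ContDiff ℝ 1 (fderiv ℝ U) := hU.fderiv_right (by norm_num)
      exact this.differentiable one_ne_zero z
    have hd' : DifferentiableAt ℝ (fderiv ℝ U) (z + (0:ℝ) • v) := by simpa using hd
    have h1 : HasDerivAt (fun t : ℝ => fderiv ℝ U (z + t • v)) (fderiv ℝ (fderiv ℝ U) z v) 0 := by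
      have := hd'.hasFDerivAt.comp_hasDerivAt 0 (hL 0)
      rw [zero_smul, add_zero] at this
      exact this
    have := (ContinuousLinearMap.apply ℝ ℝ v).hasFDerivAt.comp_hasDerivAt 0 h1
    exact this

/-- Concavity in the second variable gives nonpositive second derivative in imaginary
directions. -/
lemma imag_second_deriv_nonpos (U : X × X → ℝ) (hU : ContDiff ℝ 2 U)
    (hconc : ∀ u : X, ConcaveOn ℝ univ (fun v : X => U (u, v))) (z : X × X) (x : X) :
    fderiv ℝ (fderiv ℝ U) z ((0, x) : X × X) ((0, x) : X × X) ≤ 0 := by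
  obtain ⟨hg', hg''⟩ := hasDerivAt_line U hU z ((0, x) : X × X)
  set g : ℝ → ℝ := fun s => U (z + s • ((0, x) : X × X)) with hg
  -- g is concave on ℝ
  have hgconc : ConcaveOn ℝ univ g := by
    have haff : ConcaveOn ℝ ((AffineMap.lineMap z.2 (z.2 + x) : ℝ →ᵃ[ℝ] X) ⁻¹' univ)
        ((fun v : X => U (z.1, v)) ∘ (AffineMap.lineMap z.2 (z.2 + x) : ℝ →ᵃ[ℝ] X)) :=
      (hconc z.1).comp_affineMap _
    have : ((AffineMap.lineMap z.2 (z.2 + x) : ℝ →ᵃ[ℝ] X) ⁻¹' univ) = univ := by simp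
    rw [this] at haff
    convert haff using 1
    funext t
    show U (z + t • ((0, x) : X × X)) = U (z.1, AffineMap.lineMap z.2 (z.2 + x) t)
    have h2 : z + t • ((0, x) : X × X) = (z.1, z.2 + t • x) := by
      simp [Prod.ext_iff]
    rw [h2]
    simp [AffineMap.lineMap_apply, add_sub_cancel_left, add_comm]
  -- deriv g is antitone
  have hderiv : deriv g = fun t => fderiv ℝ U (z + t • ((0, x) : X × X)) ((0, x) : X × X) := by
    funext t; exact (hg' t).deriv
  have hanti : Antitone (deriv g) := by
    have h := hgconc.antitoneOn_deriv (fun t _ => (hg' t).differentiableAt)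
    intro a b hab
    exact h (mem_univ a) (mem_univ b) hab
  have : HasDerivAt (deriv g) (fderiv ℝ (fderiv ℝ U) z ((0, x) : X × X) ((0, x) : X × X)) 0 := by
    rw [hderiv]; exact hg''
  exact antitone_hasDerivAt_nonpos hanti this

/-- Let `X` be a finite-dimensional real Banach space and
`U : X + iX → ℝ` twice differentiable, plurisubharmonic, and concave in the
imaginary direction. Then for all `z₀`, `x, y ∈ X` and `λ ∈ [-1,1]`:
`∂²U/∂x² + ∂²U/∂y² + 2λ(∂²U/∂x∂(iy) − ∂²U/∂y∂(ix)) + λ²(∂²U/∂(ix)² + ∂²U/∂(iy)²) ≥ 0`. -/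
theorem plurisubharmonic_second_deriv_ineq
    [FiniteDimensional ℝ X] (U : X × X → ℝ) (hU : ContDiff ℝ 2 U)
    (hpsh : ∀ w v : X × X,
      0 ≤ secondDirDeriv U w v v + secondDirDeriv U w (Jmap v) (Jmap v))
    (hconc : ∀ u : X, ConcaveOn ℝ univ (fun v : X => U (u, v))) :
    ∀ (z₀ : X × X) (x y : X) (lam : ℝ), lam ∈ Icc (-1 : ℝ) 1 →
      0 ≤ secondDirDeriv U z₀ ((x, 0) : X × X) ((x, 0) : X × X) +
          secondDirDeriv U z₀ ((y, 0) : X × X) ((y, 0) : X × X) +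
          2 * lam * (secondDirDeriv U z₀ ((x, 0) : X × X) ((0, y) : X × X) -
            secondDirDeriv U z₀ ((y, 0) : X × X) ((0, x) : X × X)) +
          lam ^ 2 * (secondDirDeriv U z₀ ((0, x) : X × X) ((0, x) : X × X) +
            secondDirDeriv U z₀ ((0, y) : X × X) ((0, y) : X × X)) := by
  intro z₀ x y lam hlam
  set D : X × X → X × X → ℝ := fun a b => fderiv ℝ (fderiv ℝ U) z₀ a b with hD
  have hsdd : ∀ a b : X × X, secondDirDeriv U z₀ a b = D b a := fun a b =>
    secondDirDeriv_eq U hU z₀ a b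
  have hsymm : ∀ a b : X × X, D a b = D b a := fun a b =>
    (hU.contDiffAt.isSymmSndFDerivAt (by simp [minSmoothness_of_isRCLikeNormedField])) a b
  have hbil : ∀ (a₁ a₂ b : X × X), D (a₁ + a₂) b = D a₁ b + D a₂ b := by
    intro a₁ a₂ b; simp [hD]
  have hbil' : ∀ (a b₁ b₂ : X × X), D a (b₁ + b₂) = D a b₁ + D a b₂ := by
    intro a b₁ b₂; simp [hD]
  have hneg : ∀ (a b : X × X), D (-a) b = - D a b := by
    intro a b; simp [hD]
  have hneg' : ∀ (a b : X × X), D a (-b) = - D a b := by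
    intro a b; simp [hD]
  -- plurisubharmonicity inequalities, at λ = 1 and λ = -1
  have hP : ∀ v : X × X, 0 ≤ D v v + D (Jmap v) (Jmap v) := by
    intro v
    have := hpsh z₀ v
    rwa [hsdd v v, hsdd (Jmap v) (Jmap v)] at this
  have key : ∀ a b : X, D (a, b) (a, b) =
      D (a, 0) (a, 0) + 2 * D ((a, 0) : X × X) ((0, b) : X × X) + D (0, b) (0, b) := by
    intro a b
    have h1 : ((a, b) : X × X) = (a, 0) + (0, b) := by simp
    rw [h1, hbil, hbil', hbil', hsymm ((0, b) : X × X) ((a, 0) : X × X)]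
    ring
  have hplus := hP (x, y)
  have hminus := hP (x, -y)
  have hJ1 : Jmap ((x, y) : X × X) = (-(y, 0) : X × X) + ((0, x) : X × X) := by
    simp [Jmap, Prod.ext_iff]
  have hJ2 : Jmap ((x, -y) : X × X) = ((y, 0) : X × X) + ((0, x) : X × X) := by
    simp [Jmap, Prod.ext_iff]
  have hxy : ((x, -y) : X × X) = ((x, 0) : X × X) + (-((0, y) : X × X)) := by
    simp [Prod.ext_iff]
  have e1 : D (Jmap ((x, y) : X × X)) (Jmap ((x, y) : X × X)) =
      D (y, 0) (y, 0) - 2 * D ((y, 0) : X × X) ((0, x) : X × X) + D (0, x) (0, x) := by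
    rw [hJ1]
    simp only [hbil, hbil', hneg, hneg']
    rw [hsymm ((0, x) : X × X) ((y, 0) : X × X)]
    ring
  have e2 : D (Jmap ((x, -y) : X × X)) (Jmap ((x, -y) : X × X)) =
      D (y, 0) (y, 0) + 2 * D ((y, 0) : X × X) ((0, x) : X × X) + D (0, x) (0, x) := by
    rw [hJ2, show ((y, 0) : X × X) + ((0, x) : X × X) = (y, x) by simp]
    exact key y x
  have e3 : D ((x, -y) : X × X) ((x, -y) : X × X) =
      D (x, 0) (x, 0) - 2 * D ((x, 0) : X × X) ((0, y) : X × X) + D (0, y) (0, y) := by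
    rw [hxy]
    simp only [hbil, hbil', hneg, hneg']
    rw [hsymm ((0, y) : X × X) ((x, 0) : X × X)]
    ring
  rw [key x y, e1] at hplus
  rw [e3, e2] at hminus
  -- concavity inequalities
  have hcx : D ((0, x) : X × X) ((0, x) : X × X) ≤ 0 :=
    imag_second_deriv_nonpos U hU hconc z₀ x
  have hcy : D ((0, y) : X × X) ((0, y) : X × X) ≤ 0 :=
    imag_second_deriv_nonpos U hU hconc z₀ y
  obtain ⟨hl1, hl2⟩ := hlam
  simp only [hsdd]
  rw [hsymm ((0,y):X×X) ((x,0):X×X), hsymm ((0,x):X×X) ((y,0):X×X)]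
  nlinarith [mul_nonneg (by linarith : (0:ℝ) ≤ 1 + lam) hplus,
    mul_nonneg (by linarith : (0:ℝ) ≤ 1 - lam) hminus,
    mul_nonneg (by nlinarith : (0:ℝ) ≤ 1 - lam ^ 2)
      (by linarith : (0:ℝ) ≤ -(D ((0,x) : X × X) ((0,x) : X × X) + D ((0,y) : X × X) ((0,y) : X × X)))]
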